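/- arXiv:2012.12895 — 2 statements merged into one kernel-verified Lean document; each statement's English description precedes it below -/
import Mathlib

section
/- (Variance of Hutchinson's estimator bound) If A is a real symmetric positive semi-definite m×m matrix and z is a vector of m independent Rademacher variables, then Var(zᵀAz) ≤ 2 tr(A)², and more precisely Var(zᵀAz) = 2 Σ_{i≠j} A_{i,j}² ≤ 2 tr(A)² when A is PSD. -/
/-- A Rademacher vector: the outcome `ω : Fin m → Bool` is mapped to ±1 entries. -/
def rad {m : ℕ} (ω : Fin m → Bool) (j : Fin m) : ℝ := if ω j then 1 else -1

/-- Expectation over the uniform distribution on `{-1,1}^m`. -/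
noncomputable def expect {m : ℕ} (f : (Fin m → Bool) → ℝ) : ℝ :=
  (∑ ω : Fin m → Bool, f ω) / 2 ^ m

/-- Variance with respect to the uniform distribution on `{-1,1}^m`. -/
noncomputable def varia {m : ℕ} (f : (Fin m → Bool) → ℝ) : ℝ :=
  expect (fun ω => (f ω - expect f) ^ 2)

lemma rad_sq {m : ℕ} (ω : Fin m → Bool) (i : Fin m) : rad ω i * rad ω i = 1 := by
  unfold rad; split <;> norm_num

lemma sum_prod {m : ℕ} (g : Fin m → Bool → ℝ) :
    ∑ ω : Fin m → Bool, ∏ j, g j (ω j) = ∏ j, (g j true + g j false) := by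
  have h := Finset.prod_univ_sum (fun _ : Fin m => (Finset.univ : Finset Bool)) g
  rw [Fintype.piFinset_univ] at h
  rw [← h]
  congr 1; ext j
  simp [Fintype.sum_bool]

lemma expect_sum {m : ℕ} {κ : Type*} (s : Finset κ) (F : κ → (Fin m → Bool) → ℝ) :
    expect (fun ω => ∑ p ∈ s, F p ω) = ∑ p ∈ s, expect (F p) := by
  unfold expect
  rw [Finset.sum_comm, Finset.sum_div]

lemma expect_rad_mul {m : ℕ} (i j : Fin m) :
    expect (fun ω => rad ω i * rad ω j) = if i = j then 1 else 0 := by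
  set g : Fin m → Bool → ℝ := fun t b =>
    (if i = t then (if b then (1:ℝ) else -1) else 1) *
    (if j = t then (if b then (1:ℝ) else -1) else 1) with hg
  have hrw : ∀ ω : Fin m → Bool, rad ω i * rad ω j = ∏ t, g t (ω t) := by
    intro ω
    show rad ω i * rad ω j = ∏ t, (if i = t then rad ω t else 1) * (if j = t then rad ω t else 1)
    rw [Finset.prod_mul_distrib, Finset.prod_ite_eq, Finset.prod_ite_eq]
    simp
  have hsum : (∑ ω : Fin m → Bool, rad ω i * rad ω j) = ∏ t, (g t true + g t false) := by
    rw [Finset.sum_congr rfl (fun ω _ => hrw ω), sum_prod]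
  unfold expect
  rw [hsum]
  by_cases h : i = j
  · subst h
    have h2 : ∀ t : Fin m, g t true + g t false = 2 := by
      intro t; simp only [hg]; by_cases h : i = t <;> simp [h] <;> norm_num
    simp only [h2]
    rw [Finset.prod_const]
    simp
  · rw [Finset.prod_eq_zero (Finset.mem_univ i)]
    · simp [h]
    · simp only [hg]; simp [h, Ne.symm h]

lemma expect_rad4 {m : ℕ} (i j k l : Fin m) (hij : i ≠ j) (hkl : k ≠ l) :
    expect (fun ω => rad ω i * rad ω j * (rad ω k * rad ω l)) =
      if (i = k ∧ j = l) ∨ (i = l ∧ j = k) then 1 else 0 := by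
  set g : Fin m → Bool → ℝ := fun t b =>
    ((if i = t then (if b then (1:ℝ) else -1) else 1) *
     (if j = t then (if b then (1:ℝ) else -1) else 1)) *
    ((if k = t then (if b then (1:ℝ) else -1) else 1) *
     (if l = t then (if b then (1:ℝ) else -1) else 1)) with hg
  have hrw : ∀ ω : Fin m → Bool, rad ω i * rad ω j * (rad ω k * rad ω l) = ∏ t, g t (ω t) := by
    intro ω
    show _ = ∏ t, ((if i = t then rad ω t else 1) * (if j = t then rad ω t else 1)) *
        ((if k = t then rad ω t else 1) * (if l = t then rad ω t else 1))
    rw [Finset.prod_mul_distrib, Finset.prod_mul_distrib, Finset.prod_mul_distrib,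
      Finset.prod_ite_eq, Finset.prod_ite_eq, Finset.prod_ite_eq, Finset.prod_ite_eq]
    simp
  have hsum : (∑ ω : Fin m → Bool, rad ω i * rad ω j * (rad ω k * rad ω l))
      = ∏ t, (g t true + g t false) := by
    rw [Finset.sum_congr rfl (fun ω _ => hrw ω), sum_prod]
  unfold expect
  rw [hsum]
  by_cases hp : (i = k ∧ j = l) ∨ (i = l ∧ j = k)
  · have h2 : ∀ t : Fin m, g t true + g t false = 2 := by
      intro t
      rcases hp with ⟨rfl, rfl⟩ | ⟨rfl, rfl⟩ <;>
        · simp only [hg]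
          by_cases h1 : i = t <;> by_cases h2 : j = t <;> simp [h1, h2] <;> norm_num
    simp only [h2]
    rw [Finset.prod_const]
    simp [hp]
  · rw [if_neg hp]
    push_neg at hp
    by_cases hik : i = k
    · have hjl : j ≠ l := fun h => hp.1 hik h
      rw [Finset.prod_eq_zero (Finset.mem_univ j)]
      · simp
      · subst hik
        have h1 : l ≠ j := Ne.symm hjl
        simp only [hg]
        norm_num [hij, h1]
    · by_cases hil : i = l
      · have hjk : j ≠ k := fun h => hp.2 hil h
        rw [Finset.prod_eq_zero (Finset.mem_univ j)]
        · simp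
        · subst hil
          have h1 : k ≠ j := Ne.symm hjk
          simp only [hg]
          norm_num [hij, h1]
      · rw [Finset.prod_eq_zero (Finset.mem_univ i)]
        · simp
        · have h1 : j ≠ i := Ne.symm hij
          have h2 : k ≠ i := fun h => hik h.symm
          have h3 : l ≠ i := fun h => hil h.symm
          simp only [hg]
          norm_num [h1, h2, h3]

lemma expect_const_mul {m : ℕ} (c : ℝ) (g : (Fin m → Bool) → ℝ) :
    expect (fun ω => c * g ω) = c * expect g := by
  unfold expect
  rw [← Finset.mul_sum, mul_div_assoc]

lemma psd_entry {m : ℕ} {A : Matrix (Fin m) (Fin m) ℝ} (hA : A.PosSemidef) (i j : Fin m) :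
    A i j ^ 2 ≤ A i i * A j j := by
  by_cases hij : i = j
  · subst hij; rw [sq]
  · have hsym : A j i = A i j := by have := hA.1.apply i j; simpa using this
    have hq : ∀ t : ℝ, 0 ≤ A i i * (t * t) + (2 * A i j) * t + A j j := by
      intro t
      have h0 := hA.dotProduct_mulVec_nonneg (Pi.single i t + Pi.single j 1)
      simp [Matrix.mulVec_add, Matrix.mulVec_single, Pi.single_apply,
        Finset.sum_add_distrib, mul_ite] at h0
      rw [hsym] at h0
      ring_nf at h0 ⊢
      linarith
    have hd := discrim_le_zero hq
    rw [discrim] at hd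
    nlinarith [hd]

lemma expect_f {m : ℕ} (A : Matrix (Fin m) (Fin m) ℝ) :
    expect (fun ω => ∑ i, ∑ j, A i j * rad ω i * rad ω j) = Matrix.trace A := by
  rw [expect_sum]
  rw [Finset.sum_congr rfl (fun i _ => expect_sum Finset.univ (fun j ω => A i j * rad ω i * rad ω j))]
  have h1 : ∀ i j : Fin m, expect (fun ω => A i j * rad ω i * rad ω j)
      = A i j * (if i = j then 1 else 0) := by
    intro i j
    have : (fun ω => A i j * rad ω i * rad ω j) = fun ω => A i j * (rad ω i * rad ω j) := by
      funext ω; ring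
    rw [this, expect_const_mul, expect_rad_mul]
  simp only [h1]
  simp [Matrix.trace, Matrix.diag, Finset.sum_ite_eq]


theorem hutchinson_variance_bound {m : ℕ} (A : Matrix (Fin m) (Fin m) ℝ)
    (hA : A.PosSemidef) :
    varia (fun ω => ∑ i, ∑ j, A i j * rad ω i * rad ω j) =
      2 * ∑ i, ∑ j, (if i ≠ j then A i j ^ 2 else 0) ∧
    varia (fun ω => ∑ i, ∑ j, A i j * rad ω i * rad ω j) ≤ 2 * Matrix.trace A ^ 2 := by
  have hsym : ∀ i j, A j i = A i j := by
    intro i j; have := hA.1.apply i j; simpa using this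
  set D : Fin m → Fin m → (Fin m → Bool) → ℝ :=
    fun i j ω => if i = j then 0 else A i j * (rad ω i * rad ω j) with hD
  have step1 : ∀ ω, (∑ i, ∑ j, A i j * rad ω i * rad ω j) - Matrix.trace A
      = ∑ i, ∑ j, D i j ω := by
    intro ω
    have hterm : ∀ i j : Fin m, A i j * rad ω i * rad ω j
        = (if i = j then A i i else 0) + D i j ω := by
      intro i j
      by_cases h : i = j
      · subst h; simp [hD, mul_assoc, rad_sq]
      · simp [hD, h, mul_assoc]
    simp only [hterm, Finset.sum_add_distrib]
    simp [Matrix.trace, Matrix.diag, Finset.sum_ite_eq]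
  -- per-term expectation
  have hterm2 : ∀ i j k l : Fin m, expect (fun ω => D i j ω * D k l ω) =
      (if k = i ∧ l = j then (if i = j then 0 else A i j ^ 2) else 0)
    + (if k = j ∧ l = i then (if i = j then 0 else A i j ^ 2) else 0) := by
    intro i j k l
    by_cases hij : i = j
    · have hz : (fun ω => D i j ω * D k l ω) = fun _ => 0 := funext fun ω => by
        simp [hD, hij]
      rw [hz]
      simp [expect, hij]
    · by_cases hkl : k = l
      · have hz : (fun ω => D i j ω * D k l ω) = fun _ => 0 := funext fun ω => by
          simp [hD, hkl]
        rw [hz]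
        have h1 : ¬(k = i ∧ l = j) := fun ⟨h1, h2⟩ => hij (by rw [← h1, ← h2, hkl])
        have h2 : ¬(k = j ∧ l = i) := fun ⟨h1, h2⟩ => hij (by rw [← h2, ← h1, hkl])
        simp [expect, h1, h2]
      · have hz : (fun ω => D i j ω * D k l ω)
            = fun ω => A i j * A k l * (rad ω i * rad ω j * (rad ω k * rad ω l)) :=
          funext fun ω => by simp [hD, hij, hkl]; ring
        rw [hz, expect_const_mul, expect_rad4 i j k l hij hkl]
        by_cases hc : (i = k ∧ j = l) ∨ (i = l ∧ j = k)
        · rcases hc with ⟨h1, h2⟩ | ⟨h1, h2⟩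
          · subst h1; subst h2
            simp [hij, sq]
          · subst h1; subst h2
            have h2 : ¬(i = j ∧ j = i) := fun ⟨h1, _⟩ => hij h1
            simp [hij, Ne.symm hij, sq, hsym]
        · push_neg at hc
          have h1 : ¬(k = i ∧ l = j) := fun ⟨a, b⟩ => (hc.1 a.symm) b.symm
          have h2 : ¬(k = j ∧ l = i) := fun ⟨a, b⟩ => (hc.2 b.symm) a.symm
          have h3 : ¬((i = k ∧ j = l) ∨ (i = l ∧ j = k)) := by
            rintro (⟨a, b⟩ | ⟨a, b⟩)
            · exact (hc.1 a) b
            · exact (hc.2 a) b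
          simp [h1, h2, h3]
  have key : varia (fun ω => ∑ i, ∑ j, A i j * rad ω i * rad ω j)
      = 2 * ∑ i, ∑ j, (if i ≠ j then A i j ^ 2 else 0) := by
    unfold varia
    rw [expect_f]
    have hpt : (fun ω => ((∑ i, ∑ j, A i j * rad ω i * rad ω j) - Matrix.trace A) ^ 2)
        = fun ω => ∑ i, ∑ k, ∑ j, ∑ l, D i j ω * D k l ω := by
      funext ω
      rw [step1 ω, sq, Finset.sum_mul_sum]
      refine Finset.sum_congr rfl fun i _ => Finset.sum_congr rfl fun k _ => ?_
      rw [Finset.sum_mul_sum]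
    rw [hpt]
    rw [expect_sum]
    rw [Finset.sum_congr rfl (fun i _ => expect_sum _ _)]
    rw [Finset.sum_congr rfl (fun i _ => Finset.sum_congr rfl (fun k _ => expect_sum _ _))]
    rw [Finset.sum_congr rfl (fun i _ => Finset.sum_congr rfl (fun k _ =>
      Finset.sum_congr rfl (fun j _ => expect_sum _ _)))]
    simp only [hterm2]
    rw [Finset.sum_congr rfl (fun i _ => Finset.sum_comm)]
    have hin : ∀ i j : Fin m, (∑ k, ∑ l : Fin m,
        ((if k = i ∧ l = j then (if i = j then 0 else A i j ^ 2) else 0)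
        + (if k = j ∧ l = i then (if i = j then 0 else A i j ^ 2) else 0)))
        = 2 * (if i ≠ j then A i j ^ 2 else 0) := by
      intro i j
      simp only [Finset.sum_add_distrib, ite_and]
      simp [Finset.sum_ite_eq', ite_not]
      by_cases h : i = j <;> simp [h] <;> ring
    rw [Finset.sum_congr rfl (fun i _ => Finset.sum_congr rfl (fun j _ => hin i j))]
    rw [Finset.mul_sum]
    refine Finset.sum_congr rfl fun i _ => ?_
    rw [Finset.mul_sum]
  refine ⟨key, ?_⟩
  rw [key]
  have hub : (∑ i, ∑ j, (if i ≠ j then A i j ^ 2 else 0)) ≤ Matrix.trace A ^ 2 := by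
    have htr : Matrix.trace A ^ 2 = ∑ i, ∑ j : Fin m, A i i * A j j := by
      rw [sq, Matrix.trace, Finset.sum_mul_sum]
      simp [Matrix.diag]
    rw [htr]
    refine Finset.sum_le_sum fun i _ => Finset.sum_le_sum fun j _ => ?_
    by_cases h : i = j
    · simp [h, mul_self_nonneg]
    · simp only [h, ne_eq, not_false_iff, if_true]
      exact psd_entry hA i j
  linarith
end

section
/- (Hypercontractivity for degree-2 Rademacher chaos, (2,d) version) Let F = Σ_{j≠j'} a_{j,j'} z_j z_{j'} be a homogeneous degree-2 multilinear polynomial in independent Rademacher variables z_1,...,z_m. Then for every integer d ≥ 2, ‖F‖_d ≤ (d-1) ‖F‖_2, where ‖F‖_d = (E|F|^d)^{1/d}. -/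
/-- cast helper: `C(n,k+1)*(k+1) = C(n,k)*(n-k)` over ℝ, given `k ≤ n`. -/
lemma choose_step_real (n k : ℕ) (h : k ≤ n) :
    (n.choose (k+1) : ℝ) * (k+1) = (n.choose k : ℝ) * ((n:ℝ) - k) := by
  have c := Nat.choose_succ_right_eq n k
  have hc := congrArg (fun m : ℕ => (m:ℝ)) c
  push_cast [Nat.cast_sub h] at hc
  linarith [hc]

lemma choose_ratio (d : ℕ) (hd : 2 ≤ d) :
    ∀ i : ℕ, 2 ≤ i → ((2*d).choose (2*i) : ℝ) ≤
      (2*(d:ℝ)-3) * ((d:ℝ)-1)^(i-1) * (d.choose i) := by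
  have hd2 : (2:ℝ) ≤ (d:ℝ) := by exact_mod_cast hd
  intro i hi
  induction i with
  | zero => omega
  | succ i ih =>
    rcases Nat.lt_or_ge i 2 with hlt2 | h2
    · interval_cases i
      · omega
      · -- i+1 = 2 : base case
        have e1 : ((2*d).choose 1 : ℝ) = 2*(d:ℝ) := by
          rw [Nat.choose_one_right]; push_cast; ring
        have e2 : ((2*d).choose 2 : ℝ) * 2 = ((2*d).choose 1 : ℝ) * (2*(d:ℝ) - 1) := by
          have := choose_step_real (2*d) 1 (by omega); push_cast at this ⊢; linarith
        have e3 : ((2*d).choose 3 : ℝ) * 3 = ((2*d).choose 2 : ℝ) * (2*(d:ℝ) - 2) := by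
          have := choose_step_real (2*d) 2 (by omega); push_cast at this ⊢; linarith
        have e4 : ((2*d).choose 4 : ℝ) * 4 = ((2*d).choose 3 : ℝ) * (2*(d:ℝ) - 3) := by
          have := choose_step_real (2*d) 3 (by omega); push_cast at this ⊢; linarith
        have ed : (d.choose 2 : ℝ) * 2 = (d:ℝ) * ((d:ℝ) - 1) := by
          have := choose_step_real d 1 (by omega)
          push_cast [Nat.choose_one_right] at this ⊢; linarith
        have hC2 : ((2*d).choose 2 : ℝ) = 2*(d:ℝ)^2 - d := by
          linear_combination (1/2)*e2 + ((2*(d:ℝ)-1)/2)*e1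
        have hC3 : ((2*d).choose 3 : ℝ)*3 = (2*(d:ℝ)^2-d)*(2*(d:ℝ)-2) := by
          linear_combination e3 + (2*(d:ℝ)-2)*hC2
        have hC4 : ((2*d).choose 4 : ℝ)*12 = (2*(d:ℝ)^2-d)*(2*(d:ℝ)-2)*(2*(d:ℝ)-3) := by
          linear_combination 3*e4 + (2*(d:ℝ)-3)*hC3
        have hCd2 : (d.choose 2 : ℝ) = ((d:ℝ)^2-(d:ℝ))/2 := by
          linear_combination (1/2)*ed
        have p : (0:ℝ) ≤ (2*(d:ℝ)-3)*(2*(d:ℝ))*((d:ℝ)-1)*((d:ℝ)-2) := by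
          apply mul_nonneg; apply mul_nonneg; apply mul_nonneg
          all_goals linarith
        have h4 : (2*(2:ℕ)) = 4 := rfl
        rw [show (2:ℕ)-1 = 1 from rfl, pow_one, h4, show (1:ℕ)+1 = 2 from rfl]
        nlinarith [hC4, hCd2, p]
    · have IH := ih h2
      rcases Nat.lt_or_ge d (i+1) with hlt | hge
      · have hz : (2*d).choose (2*(i+1)) = 0 := Nat.choose_eq_zero_of_lt (by omega)
        rw [hz]
        push_cast
        have hp1 : (0:ℝ) ≤ ((d:ℝ)-1)^(i+1-1) := by apply pow_nonneg; linarith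
        have hp2 : (0:ℝ) ≤ (2*(d:ℝ)-3) := by linarith
        exact mul_nonneg (mul_nonneg hp2 hp1) (Nat.cast_nonneg _)
      · have hiR : (1:ℝ) ≤ (i:ℝ) := by exact_mod_cast Nat.one_le_of_lt h2
        have hdiR : ((i:ℝ)+1) ≤ (d:ℝ) := by exact_mod_cast hge
        have key1 : ((2*d).choose (2*i+1) : ℝ) * (2*(i:ℝ)+1) =
            ((2*d).choose (2*i) : ℝ) * (2*(d:ℝ) - 2*i) := by
          have := choose_step_real (2*d) (2*i) (by omega); push_cast at this ⊢; linarith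
        have key2 : ((2*d).choose (2*i+2) : ℝ) * (2*(i:ℝ)+2) =
            ((2*d).choose (2*i+1) : ℝ) * (2*(d:ℝ) - 2*i - 1) := by
          have := choose_step_real (2*d) (2*i+1) (by omega); push_cast at this ⊢; linarith
        have keyd : ((d.choose (i+1)) : ℝ) * ((i:ℝ)+1) = (d.choose i : ℝ) * ((d:ℝ) - i) := by
          have := choose_step_real d i (by omega); push_cast at this ⊢; linarith
        have hc2i : (0:ℝ) ≤ ((2*d).choose (2*i) : ℝ) := Nat.cast_nonneg _
        have hcdi : (0:ℝ) ≤ (d.choose i : ℝ) := Nat.cast_nonneg _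
        have hcdi1 : (0:ℝ) ≤ (d.choose (i+1) : ℝ) := Nat.cast_nonneg _
        have hpow : (0:ℝ) ≤ ((d:ℝ)-1)^(i-1) := by
          apply pow_nonneg; linarith
        have hfac : (2*(d:ℝ) - 2*i - 1) ≤ ((d:ℝ)-1) * (2*(i:ℝ)+1) := by nlinarith
        have h2d3 : (0:ℝ) ≤ 2*(d:ℝ)-3 := by linarith
        have hdi : (0:ℝ) ≤ 2*(d:ℝ) - 2*i := by linarith
        have hdi1 : (0:ℝ) ≤ 2*(d:ℝ) - 2*i - 1 := by linarith
        have step1 : ((2*d).choose (2*i+2) : ℝ) * ((2*(i:ℝ)+1)*(2*(i:ℝ)+2)) ≤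
            ((2*(d:ℝ)-3) * ((d:ℝ)-1)^(i-1) * (d.choose i)) * ((2*(d:ℝ)-2*i) * (2*(d:ℝ)-2*i-1)) := by
          have hA : ((2*d).choose (2*i+2) : ℝ) * ((2*(i:ℝ)+1)*(2*(i:ℝ)+2)) =
              (((2*d).choose (2*i) : ℝ) * (2*(d:ℝ)-2*i)) * (2*(d:ℝ)-2*i-1) := by
            calc ((2*d).choose (2*i+2) : ℝ) * ((2*(i:ℝ)+1)*(2*(i:ℝ)+2))
                = (((2*d).choose (2*i+2) : ℝ) * (2*(i:ℝ)+2)) * (2*(i:ℝ)+1) := by ring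
              _ = (((2*d).choose (2*i+1) : ℝ) * (2*(d:ℝ)-2*i-1)) * (2*(i:ℝ)+1) := by rw [key2]
              _ = (((2*d).choose (2*i+1) : ℝ) * (2*(i:ℝ)+1)) * (2*(d:ℝ)-2*i-1) := by ring
              _ = (((2*d).choose (2*i) : ℝ) * (2*(d:ℝ)-2*i)) * (2*(d:ℝ)-2*i-1) := by rw [key1]
          rw [hA, ← mul_assoc]
          exact mul_le_mul_of_nonneg_right (mul_le_mul_of_nonneg_right IH hdi) hdi1
        have step2 : ((2*(d:ℝ)-3) * ((d:ℝ)-1)^(i-1) * (d.choose i)) * ((2*(d:ℝ)-2*i) * (2*(d:ℝ)-2*i-1))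
            ≤ ((2*(d:ℝ)-3) * ((d:ℝ)-1)^(i-1) * (d.choose (i+1)) * (2*(i:ℝ)+2)) * (((d:ℝ)-1)*(2*(i:ℝ)+1)) := by
          have hrw : ((2*(d:ℝ)-3) * ((d:ℝ)-1)^(i-1) * (d.choose i)) * ((2*(d:ℝ)-2*i) * (2*(d:ℝ)-2*i-1))
              = ((2*(d:ℝ)-3) * ((d:ℝ)-1)^(i-1) * (d.choose (i+1)) * (2*(i:ℝ)+2)) * (2*(d:ℝ)-2*i-1) := by
            have heq : (d.choose i : ℝ) * (2*(d:ℝ)-2*i) = (d.choose (i+1) : ℝ) * (2*(i:ℝ)+2) := by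
              linear_combination (-2) * keyd
            linear_combination ((2*(d:ℝ)-3) * ((d:ℝ)-1)^(i-1) * (2*(d:ℝ)-2*i-1)) * heq
          rw [hrw]
          apply mul_le_mul_of_nonneg_left hfac
          have : (0:ℝ) ≤ ((d:ℝ)-1)^(i-1) := by apply pow_nonneg; linarith
          have h22 : (0:ℝ) ≤ 2*(i:ℝ)+2 := by positivity
          apply mul_nonneg (mul_nonneg (mul_nonneg h2d3 this) hcdi1) h22
        have pow_eq : ((d:ℝ)-1)^(i-1) * ((d:ℝ)-1) = ((d:ℝ)-1)^(i+1-1) := by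
          rw [← pow_succ]; congr 1; omega
        have final : ((2*d).choose (2*i+2) : ℝ) * ((2*(i:ℝ)+1)*(2*(i:ℝ)+2)) ≤
            ((2*(d:ℝ)-3) * ((d:ℝ)-1)^(i+1-1) * (d.choose (i+1))) * ((2*(i:ℝ)+1)*(2*(i:ℝ)+2)) := by
          calc ((2*d).choose (2*i+2) : ℝ) * ((2*(i:ℝ)+1)*(2*(i:ℝ)+2)) ≤ _ := step1
            _ ≤ _ := step2
            _ = ((2*(d:ℝ)-3) * ((d:ℝ)-1)^(i+1-1) * (d.choose (i+1))) * ((2*(i:ℝ)+1)*(2*(i:ℝ)+2)) := by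
                rw [← pow_eq]; ring
        have hpos : (0:ℝ) < (2*(i:ℝ)+1)*(2*(i:ℝ)+2) := by positivity
        have hgoal : ((2*d).choose (2*(i+1)) : ℝ) * ((2*(i:ℝ)+1)*(2*(i:ℝ)+2)) ≤
            ((2*(d:ℝ)-3) * ((d:ℝ)-1)^(i+1-1) * (d.choose (i+1))) * ((2*(i:ℝ)+1)*(2*(i:ℝ)+2)) := by
          rw [show 2*(i+1) = 2*i+2 from by ring]; exact final
        exact le_of_mul_le_mul_right hgoal hpos

lemma comb_main (d : ℕ) (hd : 2 ≤ d) (i : ℕ) :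
    ((2*d).choose (2*i) : ℝ) + (-1)^i * (d.choose i) ≤ 2 * ((d:ℝ)-1)^i * (d.choose i) := by
  have hd2 : (2:ℝ) ≤ (d:ℝ) := by exact_mod_cast hd
  have hd1 : (1:ℝ) ≤ (d:ℝ) - 1 := by linarith
  match i with
  | 0 => norm_num
  | 1 =>
    have c2 : ((2*d).choose 2 : ℝ) * 2 = 2*(d:ℝ) * (2*(d:ℝ) - 1) := by
      have := choose_step_real (2*d) 1 (by omega)
      push_cast [Nat.choose_one_right] at this ⊢; linarith
    simp only [pow_one, Nat.choose_one_right]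
    push_cast
    nlinarith [c2]
  | (i+2) =>
    have h := choose_ratio d hd (i+2) (by omega)
    have hc : (0:ℝ) ≤ (d.choose (i+2) : ℝ) := Nat.cast_nonneg _
    have hpow1 : (1:ℝ) ≤ ((d:ℝ)-1)^(i+2-1) := one_le_pow₀ hd1
    have habs : (-1:ℝ)^(i+2) * (d.choose (i+2)) ≤ ((d:ℝ)-1)^(i+2-1) * (d.choose (i+2)) := by
      have h1 : (-1:ℝ)^(i+2) ≤ 1 := by
        rcases Nat.even_or_odd (i+2) with he | ho
        · rw [he.neg_one_pow]
        · rw [ho.neg_one_pow]; norm_num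
      nlinarith
    have hfactor : (2*(d:ℝ)-3) * ((d:ℝ)-1)^(i+2-1) + ((d:ℝ)-1)^(i+2-1) = 2*((d:ℝ)-1)^(i+2) := by
      have : ((d:ℝ)-1)^(i+2) = ((d:ℝ)-1)^(i+2-1) * ((d:ℝ)-1) := by
        rw [← pow_succ]
        congr 1
      rw [this]; ring
    nlinarith [h, habs, hfactor]

open Finset in
lemma sum_split (n : ℕ) (f : ℕ → ℝ) :
    ∑ k ∈ range (2*n+1), f k =
      ∑ i ∈ range (n+1), f (2*i) + ∑ i ∈ range n, f (2*i+1) := by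
  induction n with
  | zero => simp
  | succ n ih =>
    have h1 : 2*(n+1)+1 = (2*n+1) + 1 + 1 := by ring
    rw [h1, sum_range_succ, sum_range_succ, ih, sum_range_succ (n := n+1), sum_range_succ (n := n)]
    have e1 : 2*n+1+1 = 2*(n+1) := by ring
    rw [e1, sum_range_succ (f := fun i => f (2*i+1)) (n := n)]
    ring


open Finset in
lemma poly_ineq (d : ℕ) (hd : 2 ≤ d) (t : ℝ) :
    ((1+t)^d + (1-t)^d)^2 ≤ 4*(1+((d:ℝ)-1)*t^2)^d := by
  have hsq : ((1+t)^d + (1-t)^d)^2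
      = (1+t)^(2*d) + (1-t)^(2*d) + 2*(1-t^2)^d := by
    have h1 : (1+t)^(2*d) = ((1+t)^d)^2 := by rw [← pow_mul, mul_comm]
    have h2 : (1-t)^(2*d) = ((1-t)^d)^2 := by rw [← pow_mul, mul_comm]
    have h3 : (1-t^2)^d = (1+t)^d * (1-t)^d := by
      rw [← mul_pow]; congr 1; ring
    rw [h1, h2, h3]; ring
  have exp1 : (1+t)^(2*d) + (1-t)^(2*d)
      = ∑ i ∈ range (d+1), 2 * (t^(2*i) * ((2*d).choose (2*i))) := by
    have a1 : (1+t)^(2*d) = ∑ k ∈ range (2*d+1), t^k * ((2*d).choose k) := by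
      rw [show (1+t) = (t+1) by ring, add_pow]
      simp
    have a2 : (1-t)^(2*d) = ∑ k ∈ range (2*d+1), (-t)^k * ((2*d).choose k) := by
      rw [show (1-t) = (-t+1) by ring, add_pow]
      simp
    rw [a1, a2, ← sum_add_distrib]
    rw [sum_split d (fun k => t^k * ((2*d).choose k) + (-t)^k * ((2*d).choose k))]
    have hodd : ∑ i ∈ range d, (t^(2*i+1) * (((2*d).choose (2*i+1)):ℝ)
        + (-t)^(2*i+1) * ((2*d).choose (2*i+1))) = 0 := by
      apply sum_eq_zero
      intro i _
      have : (-t)^(2*i+1) = -(t^(2*i+1)) := Odd.neg_pow ⟨i, by ring⟩ t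
      rw [this]; ring
    rw [hodd, add_zero]
    apply sum_congr rfl
    intro i _
    have : (-t)^(2*i) = t^(2*i) := Even.neg_pow ⟨i, by ring⟩ t
    rw [this]; ring
  have exp2 : (1-t^2)^d = ∑ i ∈ range (d+1), (-1)^i * t^(2*i) * ((d.choose i):ℝ) := by
    rw [show (1-t^2) = (-t^2+1) by ring, add_pow]
    simp only [one_pow, mul_one]
    apply sum_congr rfl
    intro i _
    have : (-t^2)^i = (-1)^i * t^(2*i) := by
      rw [neg_pow, ← pow_mul, mul_comm 2 i]
    rw [this]
  have exp3 : (4:ℝ)*(1+((d:ℝ)-1)*t^2)^d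
      = ∑ i ∈ range (d+1), 4 * (((d:ℝ)-1)^i * t^(2*i) * ((d.choose i):ℝ)) := by
    rw [show (1+((d:ℝ)-1)*t^2) = (((d:ℝ)-1)*t^2+1) by ring, add_pow, mul_sum]
    apply sum_congr rfl
    intro i _
    have : (((d:ℝ)-1)*t^2)^i = ((d:ℝ)-1)^i * t^(2*i) := by
      rw [mul_pow, ← pow_mul, mul_comm 2 i]
    simp only [this]
    ring
  rw [hsq, exp1, exp2, exp3, mul_sum, ← sum_add_distrib]
  apply sum_le_sum
  intro i _
  have hcomb := comb_main d hd i
  have ht : (0:ℝ) ≤ t^(2*i) := by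
    rw [pow_mul]; positivity
  nlinarith [mul_le_mul_of_nonneg_right hcomb ht]

lemma two_point_pos (d : ℕ) (hd : 2 ≤ d) (a b : ℝ) (ha : 0 < a) :
    ((a+b)^d + (a-b)^d)^2 ≤ 4*(a^2+((d:ℝ)-1)*b^2)^d := by
  have h := poly_ineq d hd (b/a)
  have e1 : a*(1+b/a) = a+b := by field_simp
  have e2 : a*(1-b/a) = a-b := by field_simp
  have e3 : a^2*(1+((d:ℝ)-1)*(b/a)^2) = a^2+((d:ℝ)-1)*b^2 := by
    field_simp
  calc ((a+b)^d + (a-b)^d)^2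
      = ((a*(1+b/a))^d + (a*(1-b/a))^d)^2 := by rw [e1, e2]
    _ = (a^2)^d * ((1+b/a)^d + (1-b/a)^d)^2 := by
        rw [mul_pow, mul_pow, show (a^2)^d = (a^d)^2 from by
          rw [← pow_mul, ← pow_mul, mul_comm]]; ring
    _ ≤ (a^2)^d * (4*(1+((d:ℝ)-1)*(b/a)^2)^d) := by
        apply mul_le_mul_of_nonneg_left h (by positivity)
    _ = 4*((a^2*(1+((d:ℝ)-1)*(b/a)^2))^d) := by rw [mul_pow]; ring
    _ = 4*(a^2+((d:ℝ)-1)*b^2)^d := by rw [e3]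

lemma abs_two_point (d : ℕ) (hd : 2 ≤ d) (A B : ℝ) (hA : 0 ≤ A) (hB : 0 ≤ B) :
    ((A+B)^d + |A-B|^d)^2 ≤ 4*(A^2+((d:ℝ)-1)*B^2)^d := by
  have hd1 : (1:ℝ) ≤ (d:ℝ) - 1 := by
    have : (2:ℝ) ≤ (d:ℝ) := by exact_mod_cast hd
    linarith
  rcases le_total B A with h | h
  · rw [abs_of_nonneg (by linarith)]
    rcases eq_or_lt_of_le hA with h0 | h0
    · have hB0 : B = 0 := le_antisymm (h.trans h0.symm.le) hB
      rw [← h0, hB0]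
      norm_num [zero_pow (show d ≠ 0 by omega)]
    · exact two_point_pos d hd A B h0
  · rw [abs_sub_comm, abs_of_nonneg (by linarith)]
    rcases eq_or_lt_of_le hB with h0 | h0
    · have hA0 : A = 0 := le_antisymm (h.trans h0.symm.le) hA
      rw [← h0, hA0]
      norm_num [zero_pow (show d ≠ 0 by omega)]
    · have key := two_point_pos d hd B A h0
      rw [add_comm A B]
      have mono : B^2+((d:ℝ)-1)*A^2 ≤ A^2+((d:ℝ)-1)*B^2 := by
        have hp : (0:ℝ) ≤ ((d:ℝ)-2) * ((B-A)*(B+A)) :=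
          mul_nonneg (by linarith) (mul_nonneg (by linarith) (by linarith))
        nlinarith [hp]
      calc ((B+A)^d + (B-A)^d)^2 ≤ 4*(B^2+((d:ℝ)-1)*A^2)^d := key
        _ ≤ 4*(A^2+((d:ℝ)-1)*B^2)^d := by
            have := pow_le_pow_left₀ (by positivity) mono d
            linarith

lemma two_point (d : ℕ) (hd : 2 ≤ d) (a b : ℝ) :
    (|a+b|^d + |a-b|^d)^2 ≤ 4*(a^2+((d:ℝ)-1)*b^2)^d := by
  have key : |a+b|^d + |a-b|^d = (|a|+|b|)^d + (abs (|a| - |b|))^d := by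
    rcases le_total 0 a with ha | ha <;> rcases le_total 0 b with hb | hb
    · rw [abs_of_nonneg ha, abs_of_nonneg hb, abs_of_nonneg (by linarith : 0 ≤ a+b)]
    · rw [abs_of_nonneg ha, abs_of_nonpos hb, sub_neg_eq_add,
        show a + -b = a - b from by ring,
        abs_of_nonneg (show (0:ℝ) ≤ a - b from by linarith)]
      ring
    · rw [abs_of_nonpos ha, abs_of_nonneg hb,
        show -a + b = -(a-b) from by ring, show -a - b = -(a+b) from by ring,
        abs_neg, abs_of_nonpos (show a - b ≤ 0 from by linarith)]
      ring
    · rw [abs_of_nonpos ha, abs_of_nonpos hb,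
        show -a + -b = -(a+b) from by ring, show -a - -b = -(a-b) from by ring,
        abs_neg, abs_of_nonpos (show a + b ≤ 0 from by linarith)]
  rw [key, ← sq_abs a, ← sq_abs b]
  exact abs_two_point d hd |a| |b| (abs_nonneg a) (abs_nonneg b)

lemma two_point_rpow (d : ℕ) (hd : 2 ≤ d) (a b : ℝ) :
    (|a+b|^d + |a-b|^d)/2 ≤ (a^2+((d:ℝ)-1)*b^2) ^ (((d:ℝ)/2)) := by
  have hd1 : (1:ℝ) ≤ (d:ℝ) - 1 := by
    have : (2:ℝ) ≤ (d:ℝ) := by exact_mod_cast hd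
    linarith
  set R := a^2+((d:ℝ)-1)*b^2 with hRdef
  have hR : 0 ≤ R := by
    have : 0 ≤ ((d:ℝ)-1)*b^2 := by positivity
    positivity
  have hL : 0 ≤ |a+b|^d + |a-b|^d := by positivity
  have h := two_point d hd a b
  have h1 : |a+b|^d + |a-b|^d ≤ Real.sqrt (4*R^d) := by
    rw [show |a+b|^d + |a-b|^d = Real.sqrt ((|a+b|^d + |a-b|^d)^2) from
      (Real.sqrt_sq hL).symm]
    exact Real.sqrt_le_sqrt h
  have h2 : Real.sqrt (4*R^d) = 2 * R ^ ((d:ℝ)/2) := by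
    rw [show (4:ℝ)*R^d = 2^2 * R^d from by norm_num, Real.sqrt_mul (by positivity),
      Real.sqrt_sq (by norm_num : (0:ℝ) ≤ 2)]
    congr 1
    rw [Real.sqrt_eq_rpow, ← Real.rpow_natCast R d, ← Real.rpow_mul hR]
    congr 1
    ring
  linarith [h1, h2 ▸ h1]

/-- The key analytic step: Bonami two-point + Minkowski. -/
lemma step_lemma' (d : ℕ) (hd : 2 ≤ d) {m : ℕ} (X Y : (Fin m → Bool) → ℝ) :
    (expect (fun ω => (|X ω + Y ω|^d + |X ω - Y ω|^d)/2)) ^ (2/(d:ℝ)) ≤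
      (expect fun ω => |X ω|^d) ^ (2/(d:ℝ))
        + ((d:ℝ)-1) * (expect fun ω => |Y ω|^d) ^ (2/(d:ℝ)) := by
  have hdR : (2:ℝ) ≤ (d:ℝ) := by exact_mod_cast hd
  have hd1 : (1:ℝ) ≤ (d:ℝ) - 1 := by linarith
  set p : ℝ := (d:ℝ)/2 with hp
  have hp1 : 1 ≤ p := by rw [hp]; linarith
  have hp0 : 0 < p := by linarith
  have hinv : 2/(d:ℝ) = 1/p := by rw [hp]; field_simp
  set N : ℝ := 2^m with hN
  have hN0 : (0:ℝ) < N := by positivity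
  -- pointwise bound
  have pt : ∀ ω, (|X ω + Y ω|^d + |X ω - Y ω|^d)/2 ≤
      ((X ω)^2 + ((d:ℝ)-1)*(Y ω)^2) ^ p := fun ω => two_point_rpow d hd (X ω) (Y ω)
  -- Minkowski
  have mink := Real.Lp_add_le Finset.univ (fun ω => (X ω)^2) (fun ω => ((d:ℝ)-1)*(Y ω)^2) hp1
  -- rewrite the three sums
  have rw1 : ∀ ω : Fin m → Bool, |(X ω)^2 + ((d:ℝ)-1)*(Y ω)^2| ^ p
      = ((X ω)^2 + ((d:ℝ)-1)*(Y ω)^2) ^ p := by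
    intro ω
    rw [abs_of_nonneg (by positivity)]
  have rw2 : ∀ ω : Fin m → Bool, |(X ω)^2| ^ p = |X ω| ^ d := by
    intro ω
    rw [abs_of_nonneg (by positivity), ← sq_abs,
      ← Real.rpow_natCast |X ω| 2, ← Real.rpow_mul (abs_nonneg _),
      show ((2:ℕ):ℝ) * p = (d:ℝ) from by rw [hp]; push_cast; ring,
      Real.rpow_natCast]
  have rw3 : ∀ ω : Fin m → Bool, |((d:ℝ)-1)*(Y ω)^2| ^ p = ((d:ℝ)-1)^p * |Y ω| ^ d := by
    intro ω
    rw [abs_of_nonneg (by positivity), Real.mul_rpow (by linarith) (by positivity)]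
    congr 1
    rw [← sq_abs, ← Real.rpow_natCast |Y ω| 2, ← Real.rpow_mul (abs_nonneg _),
      show ((2:ℕ):ℝ) * p = (d:ℝ) from by rw [hp]; push_cast; ring,
      Real.rpow_natCast]
  simp only [rw1, rw2, rw3] at mink
  set SR : ℝ := ∑ ω : Fin m → Bool, ((X ω)^2 + ((d:ℝ)-1)*(Y ω)^2) ^ p with hSR
  set SX : ℝ := ∑ ω : Fin m → Bool, |X ω| ^ d with hSX
  set SY : ℝ := ∑ ω : Fin m → Bool, |Y ω| ^ d with hSY
  set S0 : ℝ := ∑ ω : Fin m → Bool, (|X ω + Y ω|^d + |X ω - Y ω|^d)/2 with hS0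
  have hS0n : 0 ≤ S0 := Finset.sum_nonneg fun ω _ => by positivity
  have hSRn : 0 ≤ SR := Finset.sum_nonneg fun ω _ => by positivity
  have hSXn : 0 ≤ SX := Finset.sum_nonneg fun ω _ => by positivity
  have hSYn : 0 ≤ SY := Finset.sum_nonneg fun ω _ => by positivity
  have h01 : S0 ≤ SR := Finset.sum_le_sum fun ω _ => pt ω
  -- pull out the constant in mink
  have hpull : (∑ ω : Fin m → Bool, ((d:ℝ)-1)^p * |Y ω| ^ d) ^ (1/p)
      = ((d:ℝ)-1) * SY ^ (1/p) := by
    rw [← Finset.mul_sum, Real.mul_rpow (by positivity) hSYn,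
      ← Real.rpow_mul (by linarith : (0:ℝ) ≤ (d:ℝ)-1), mul_one_div,
      div_self (ne_of_gt hp0), Real.rpow_one]
  rw [hinv]
  have expectL : (expect fun ω => (|X ω + Y ω|^d + |X ω - Y ω|^d)/2) = S0 / N := rfl
  have expectX : (expect fun ω => |X ω|^d) = SX / N := rfl
  have expectY : (expect fun ω => |Y ω|^d) = SY / N := rfl
  rw [expectL, expectX, expectY,
    Real.div_rpow hS0n (le_of_lt hN0), Real.div_rpow hSXn (le_of_lt hN0),
    Real.div_rpow hSYn (le_of_lt hN0)]
  have hNp : (0:ℝ) < N ^ (1/p) := Real.rpow_pos_of_pos hN0 _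
  have hmain : S0 ^ (1/p) ≤ SX ^ (1/p) + ((d:ℝ)-1) * SY ^ (1/p) := by
    calc S0 ^ (1/p) ≤ SR ^ (1/p) :=
          Real.rpow_le_rpow hS0n h01 (by positivity)
      _ ≤ SX ^ (1/p) + (∑ ω : Fin m → Bool, ((d:ℝ)-1)^p * |Y ω| ^ d) ^ (1/p) := mink
      _ = SX ^ (1/p) + ((d:ℝ)-1) * SY ^ (1/p) := by rw [hpull]
  calc S0 ^ (1/p) / N ^ (1/p)
      ≤ (SX ^ (1/p) + ((d:ℝ)-1) * SY ^ (1/p)) / N ^ (1/p) :=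
        div_le_div_of_nonneg_right hmain hNp.le
    _ = SX ^ (1/p) / N ^ (1/p) + ((d:ℝ)-1) * (SY ^ (1/p) / N ^ (1/p)) := by ring

section helpers

lemma expect_nonneg {m : ℕ} {f : (Fin m → Bool) → ℝ} (h : ∀ ω, 0 ≤ f ω) :
    0 ≤ expect f := by
  unfold expect
  apply div_nonneg (Finset.sum_nonneg fun ω _ => h ω) (by positivity)

lemma expect_add {m : ℕ} (f g : (Fin m → Bool) → ℝ) :
    expect (fun ω => f ω + g ω) = expect f + expect g := by
  unfold expect
  rw [Finset.sum_add_distrib, add_div]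

lemma expect_smul {m : ℕ} (c : ℝ) (f : (Fin m → Bool) → ℝ) :
    expect (fun ω => c * f ω) = c * expect f := by
  unfold expect
  rw [← Finset.mul_sum, mul_div_assoc]

lemma expect_const {m : ℕ} (c : ℝ) : expect (fun _ : Fin m → Bool => c) = c := by
  unfold expect
  rw [Finset.sum_const, Finset.card_univ]
  simp only [Fintype.card_fun, Fintype.card_bool, Fintype.card_fin, nsmul_eq_mul]
  push_cast
  field_simp

lemma expect_avg {m : ℕ} (f g : (Fin m → Bool) → ℝ) :
    (expect f + expect g)/2 = expect (fun ω => (f ω + g ω)/2) := by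
  have h : (fun ω => (f ω + g ω)/2) = fun ω : Fin m → Bool => (1/2) * (f ω + g ω) :=
    funext fun ω => by ring
  rw [h, expect_smul, ← expect_add]
  ring

lemma sq_split {m : ℕ} (X Y : (Fin m → Bool) → ℝ) :
    (expect (fun ω => (X ω + Y ω)^2) + expect (fun ω => (X ω - Y ω)^2))/2
      = expect (fun ω => (X ω)^2) + expect (fun ω => (Y ω)^2) := by
  rw [← expect_add]
  have h : (fun ω => (X ω + Y ω)^2 + (X ω - Y ω)^2)
      = fun ω : Fin m → Bool => 2 * ((X ω)^2 + (Y ω)^2) := funext fun ω => by ring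
  rw [h, expect_smul, ← expect_add]
  ring

/-- Splitting the expectation over the first coordinate. -/
lemma expect_succ {m : ℕ} (f : (Fin (m+1) → Bool) → ℝ) :
    expect f = (expect (fun ω => f (Fin.cons true ω)) + expect (fun ω => f (Fin.cons false ω))) / 2 := by
  unfold expect
  have he : (∑ ω : Fin (m+1) → Bool, f ω)
      = ∑ q : Bool × (Fin m → Bool), f (Fin.cons q.1 q.2) :=
    (Fintype.sum_equiv (Fin.consEquiv (fun _ : Fin (m+1) => Bool))
      (fun q => f (Fin.cons q.1 q.2)) f (fun q => rfl)).symm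
  rw [he, Fintype.sum_prod_type, Fintype.sum_bool, pow_succ]
  ring

/-- `(|y|^d)^(2/d) = y^2`. -/
lemma abs_pow_rpow (d : ℕ) (hd : 2 ≤ d) (y : ℝ) : ((|y|^d : ℝ)) ^ (2/(d:ℝ)) = y^2 := by
  have hd0 : (d:ℝ) ≠ 0 := by positivity
  rw [← Real.rpow_natCast |y| d, ← Real.rpow_mul (abs_nonneg y),
    show (d:ℝ) * (2/(d:ℝ)) = ((2:ℕ):ℝ) from by push_cast; field_simp,
    Real.rpow_natCast, sq_abs]

end helpers

section decomp

/-- Decomposition of a linear form when splitting off coordinate 0. -/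
lemma L_decomp {m : ℕ} (c : Fin (m+1) → ℝ) (b : Bool) (ω' : Fin m → Bool) :
    ∑ j, c j * rad (Fin.cons b ω') j
      = (∑ j, c j.succ * rad ω' j) + (if b then (1:ℝ) else -1) * c 0 := by
  rw [Fin.sum_univ_succ]
  simp only [rad, Fin.cons_zero, Fin.cons_succ]
  ring

/-- Decomposition of the quadratic chaos when splitting off coordinate 0. -/
lemma F_decomp {m : ℕ} (a : Fin (m+1) → Fin (m+1) → ℝ) (b : Bool) (ω' : Fin m → Bool) :
    (∑ j, ∑ j', if j ≠ j' then a j j' * rad (Fin.cons b ω') j * rad (Fin.cons b ω') j' else 0)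
      = (∑ j, ∑ j', if j ≠ j' then a j.succ j'.succ * rad ω' j * rad ω' j' else 0)
        + (if b then (1:ℝ) else -1) * (∑ j, (a 0 j.succ + a j.succ 0) * rad ω' j) := by
  have hzs : ∀ j : Fin m, ((0:Fin (m+1)) = j.succ) ↔ False :=
    fun j => ⟨fun h => (Fin.succ_ne_zero j) h.symm, False.elim⟩
  have hss : ∀ j j' : Fin m, (Fin.succ j = Fin.succ j') ↔ (j = j') :=
    fun j j' => Fin.succ_inj
  simp only [Fin.sum_univ_succ, rad, Fin.cons_zero, Fin.cons_succ, ne_eq, hzs, hss,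
    Fin.succ_ne_zero, not_false_iff, if_true, iff_false, not_true, if_false,
    eq_self_iff_true, not_false_eq_true, ite_true, ite_false]
  rw [Finset.mul_sum, zero_add, ← Finset.sum_add_distrib, ← Finset.sum_add_distrib]
  exact Finset.sum_congr rfl fun x _ => by ring

end decomp

section induction_lemmas

lemma lin_bound (d : ℕ) (hd : 2 ≤ d) :
    ∀ (m : ℕ) (c : Fin m → ℝ),
    (expect (fun ω => |∑ j, c j * rad ω j| ^ d)) ^ (2/(d:ℝ))
      ≤ ((d:ℝ)-1) * expect (fun ω => (∑ j, c j * rad ω j)^2) := by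
  have hd0 : (2:ℝ)/(d:ℝ) ≠ 0 := by positivity
  have hd1 : (1:ℝ) ≤ (d:ℝ) - 1 := by
    have : (2:ℝ) ≤ (d:ℝ) := by exact_mod_cast hd
    linarith
  intro m
  induction m with
  | zero =>
    intro c
    have h0 : (fun ω : Fin 0 → Bool => |∑ j, c j * rad ω j| ^ d)
        = fun _ : Fin 0 → Bool => (0:ℝ) := by
      funext ω
      simp [zero_pow (show d ≠ 0 by omega)]
    have h1 : (fun ω : Fin 0 → Bool => (∑ j, c j * rad ω j)^2)
        = fun _ : Fin 0 → Bool => (0:ℝ) := by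
      funext ω; simp
    rw [h0, h1, expect_const, Real.zero_rpow hd0]
    simp
  | succ m ih =>
    intro c
    set X : (Fin m → Bool) → ℝ := fun ω' => ∑ j, c j.succ * rad ω' j with hX
    set c0 : ℝ := c 0 with hc0
    -- identify the d-th moment
    have eT : (fun ω' => |∑ j, c j * rad (Fin.cons true ω') j| ^ d)
        = fun ω' => |X ω' + c0| ^ d := by
      funext ω'; rw [L_decomp, if_pos rfl, one_mul]
    have eF : (fun ω' => |∑ j, c j * rad (Fin.cons false ω') j| ^ d)
        = fun ω' => |X ω' - c0| ^ d := by
      funext ω'; rw [L_decomp, if_neg (by decide), neg_one_mul, ← sub_eq_add_neg]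
    have hmom : expect (fun ω => |∑ j, c j * rad ω j| ^ d)
        = expect (fun ω' => (|X ω' + c0|^d + |X ω' - c0|^d)/2) := by
      rw [expect_succ, eT, eF, expect_avg]
    -- second moment
    have eT2 : (fun ω' => (∑ j, c j * rad (Fin.cons true ω') j)^2)
        = fun ω' => (X ω' + c0)^2 := by
      funext ω'; rw [L_decomp, if_pos rfl, one_mul]
    have eF2 : (fun ω' => (∑ j, c j * rad (Fin.cons false ω') j)^2)
        = fun ω' => (X ω' - c0)^2 := by
      funext ω'; rw [L_decomp, if_neg (by decide), neg_one_mul, ← sub_eq_add_neg]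
    have hsq : expect (fun ω => (∑ j, c j * rad ω j)^2)
        = expect (fun ω' => (X ω')^2) + c0^2 := by
      rw [expect_succ, eT2, eF2, sq_split X (fun _ => c0), expect_const]
    rw [hmom, hsq]
    calc (expect (fun ω' => (|X ω' + c0|^d + |X ω' - c0|^d)/2)) ^ (2/(d:ℝ))
        ≤ (expect fun ω' => |X ω'|^d) ^ (2/(d:ℝ))
          + ((d:ℝ)-1) * (expect fun ω' : Fin m → Bool => |c0|^d) ^ (2/(d:ℝ)) :=
          step_lemma' d hd X (fun _ => c0)
      _ = (expect fun ω' => |X ω'|^d) ^ (2/(d:ℝ)) + ((d:ℝ)-1) * c0^2 := by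
          rw [expect_const, abs_pow_rpow d hd]
      _ ≤ ((d:ℝ)-1) * expect (fun ω' => (X ω')^2) + ((d:ℝ)-1) * c0^2 := by
          have := ih (fun j => c j.succ)
          exact add_le_add this le_rfl
      _ = ((d:ℝ)-1) * (expect (fun ω' => (X ω')^2) + c0^2) := by ring

lemma quad_bound (d : ℕ) (hd : 2 ≤ d) :
    ∀ (m : ℕ) (a : Fin m → Fin m → ℝ),
    (expect (fun ω => |∑ j, ∑ j', if j ≠ j' then a j j' * rad ω j * rad ω j' else 0| ^ d)) ^ (2/(d:ℝ))
      ≤ ((d:ℝ)-1)^2 * expect (fun ω => (∑ j, ∑ j', if j ≠ j' then a j j' * rad ω j * rad ω j' else 0)^2) := by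
  have hd0 : (2:ℝ)/(d:ℝ) ≠ 0 := by positivity
  have hd1 : (1:ℝ) ≤ (d:ℝ) - 1 := by
    have : (2:ℝ) ≤ (d:ℝ) := by exact_mod_cast hd
    linarith
  intro m
  induction m with
  | zero =>
    intro a
    have h0 : (fun ω : Fin 0 → Bool => |∑ j, ∑ j', if j ≠ j' then a j j' * rad ω j * rad ω j' else 0| ^ d)
        = fun _ : Fin 0 → Bool => (0:ℝ) := by
      funext ω
      simp [zero_pow (show d ≠ 0 by omega)]
    have h1 : (fun ω : Fin 0 → Bool => (∑ j, ∑ j', if j ≠ j' then a j j' * rad ω j * rad ω j' else 0)^2)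
        = fun _ : Fin 0 → Bool => (0:ℝ) := by
      funext ω; simp
    rw [h0, h1, expect_const, Real.zero_rpow hd0]
    simp
  | succ m ih =>
    intro a
    set Q : (Fin m → Bool) → ℝ :=
      fun ω' => ∑ j, ∑ j', if j ≠ j' then a j.succ j'.succ * rad ω' j * rad ω' j' else 0 with hQ
    set D : (Fin m → Bool) → ℝ :=
      fun ω' => ∑ j, (a 0 j.succ + a j.succ 0) * rad ω' j with hD
    have eT : (fun ω' => |∑ j, ∑ j', if j ≠ j' then a j j' * rad (Fin.cons true ω') j * rad (Fin.cons true ω') j' else 0| ^ d)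
        = fun ω' => |Q ω' + D ω'| ^ d := by
      funext ω'; rw [F_decomp, if_pos rfl, one_mul]
    have eF : (fun ω' => |∑ j, ∑ j', if j ≠ j' then a j j' * rad (Fin.cons false ω') j * rad (Fin.cons false ω') j' else 0| ^ d)
        = fun ω' => |Q ω' - D ω'| ^ d := by
      funext ω'; rw [F_decomp, if_neg (by decide), neg_one_mul, ← sub_eq_add_neg]
    have hmom : expect (fun ω => |∑ j, ∑ j', if j ≠ j' then a j j' * rad ω j * rad ω j' else 0| ^ d)
        = expect (fun ω' => (|Q ω' + D ω'|^d + |Q ω' - D ω'|^d)/2) := by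
      rw [expect_succ, eT, eF, expect_avg]
    have eT2 : (fun ω' => (∑ j, ∑ j', if j ≠ j' then a j j' * rad (Fin.cons true ω') j * rad (Fin.cons true ω') j' else 0)^2)
        = fun ω' => (Q ω' + D ω')^2 := by
      funext ω'; rw [F_decomp, if_pos rfl, one_mul]
    have eF2 : (fun ω' => (∑ j, ∑ j', if j ≠ j' then a j j' * rad (Fin.cons false ω') j * rad (Fin.cons false ω') j' else 0)^2)
        = fun ω' => (Q ω' - D ω')^2 := by
      funext ω'; rw [F_decomp, if_neg (by decide), neg_one_mul, ← sub_eq_add_neg]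
    have hsq : expect (fun ω => (∑ j, ∑ j', if j ≠ j' then a j j' * rad ω j * rad ω j' else 0)^2)
        = expect (fun ω' => (Q ω')^2) + expect (fun ω' => (D ω')^2) := by
      rw [expect_succ, eT2, eF2, sq_split Q D]
    rw [hmom, hsq]
    calc (expect (fun ω' => (|Q ω' + D ω'|^d + |Q ω' - D ω'|^d)/2)) ^ (2/(d:ℝ))
        ≤ (expect fun ω' => |Q ω'|^d) ^ (2/(d:ℝ))
          + ((d:ℝ)-1) * (expect fun ω' => |D ω'|^d) ^ (2/(d:ℝ)) := step_lemma' d hd Q D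
      _ ≤ ((d:ℝ)-1)^2 * expect (fun ω' => (Q ω')^2)
          + ((d:ℝ)-1) * (((d:ℝ)-1) * expect (fun ω' => (D ω')^2)) := by
          apply add_le_add (ih _)
          apply mul_le_mul_of_nonneg_left (lin_bound d hd m _) (by linarith)
      _ = ((d:ℝ)-1)^2 * (expect (fun ω' => (Q ω')^2) + expect (fun ω' => (D ω')^2)) := by ring

end induction_lemmas

theorem hypercontractivity_degree_two {m : ℕ} (a : Fin m → Fin m → ℝ)
    (F : (Fin m → Bool) → ℝ)
    (hF : F = fun ω => ∑ j, ∑ j', if j ≠ j' then a j j' * rad ω j * rad ω j' else 0)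
    (d : ℕ) (hd : 2 ≤ d) :
    (expect (fun ω => |F ω| ^ d)) ^ ((1 : ℝ) / d) ≤
      ((d : ℝ) - 1) * (expect (fun ω => F ω ^ 2)) ^ ((1 : ℝ) / 2) := by
  subst hF
  have hd1 : (1:ℝ) ≤ (d:ℝ) - 1 := by
    have : (2:ℝ) ≤ (d:ℝ) := by exact_mod_cast hd
    linarith
  have hq := quad_bound d hd m a
  set E : ℝ := expect (fun ω => |∑ j, ∑ j', if j ≠ j' then a j j' * rad ω j * rad ω j' else 0| ^ d) with hE
  set V : ℝ := expect (fun ω => (∑ j, ∑ j', if j ≠ j' then a j j' * rad ω j * rad ω j' else 0)^2) with hV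
  have hEn : 0 ≤ E := expect_nonneg fun ω => by positivity
  have hVn : 0 ≤ V := expect_nonneg fun ω => by positivity
  have key : E ^ ((1:ℝ)/d) = (E ^ ((2:ℝ)/d)) ^ ((1:ℝ)/2) := by
    rw [← Real.rpow_mul hEn]
    congr 1
    ring
  rw [key]
  calc (E ^ ((2:ℝ)/d)) ^ ((1:ℝ)/2)
      ≤ (((d:ℝ)-1)^2 * V) ^ ((1:ℝ)/2) := by
        apply Real.rpow_le_rpow (Real.rpow_nonneg hEn _) hq (by norm_num)
    _ = ((d:ℝ)-1) * V ^ ((1:ℝ)/2) := by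
        rw [Real.mul_rpow (by positivity) hVn]
        congr 1
        rw [← Real.rpow_natCast ((d:ℝ)-1) 2, ← Real.rpow_mul (by linarith)]
        norm_num
end
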